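/- Let S be an independent sampling on {1, …, n} with inclusion probabilities 0 < p_i ≤ 1 (i.e., p_C = Π_{i∈C} p_i · Π_{i∉C} (1 − p_i)), let x* ∈ ℝ^d with Σ_{i=1}^n ∇f_i(x*) = 0, and write h_i = ∇f_i(x*). Then σ² := Σ_C p_C ‖∇f_{v(C)}(x*)‖² = (1/n²) Σ_{i=1}^n ((1 − p_i)/p_i) ‖h_i‖². -/
import Mathlib

open Finset RealInnerProductSpace

private lemma sum_p_superset {n : ℕ} (pr : Fin n → ℝ) (S : Finset (Fin n)) :
    ∑ C ∈ Finset.univ.filter (fun C : Finset (Fin n) => S ⊆ C),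
      ((∏ i ∈ C, pr i) * ∏ i ∈ Cᶜ, (1 - pr i)) = ∏ i ∈ S, pr i := by
  have hbij : ∑ C ∈ Finset.univ.filter (fun C : Finset (Fin n) => S ⊆ C),
      ((∏ i ∈ C, pr i) * ∏ i ∈ Cᶜ, (1 - pr i))
      = ∑ D ∈ Sᶜ.powerset, ((∏ i ∈ S ∪ D, pr i) * ∏ i ∈ (S ∪ D)ᶜ, (1 - pr i)) := by
    apply Finset.sum_nbij' (fun C => C \ S) (fun D => S ∪ D)
    · intro C hC
      simp only [mem_filter, mem_univ, true_and] at hC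
      simp only [mem_powerset]
      intro x hx
      simp only [mem_sdiff] at hx
      simp [mem_compl, hx.2]
    · intro D hD
      simp only [mem_filter, mem_univ, true_and]
      exact subset_union_left
    · intro C hC
      simp only [mem_filter, mem_univ, true_and] at hC
      exact Finset.union_sdiff_of_subset hC
    · intro D hD
      simp only [mem_powerset] at hD
      apply Finset.union_sdiff_cancel_left
      rw [Finset.disjoint_left]
      intro a haS haD
      have := hD haD
      simp only [mem_compl] at this
      exact this haS
    · intro C hC
      simp only [mem_filter, mem_univ, true_and] at hC
      rw [Finset.union_sdiff_of_subset hC]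
  rw [hbij]
  have hcong : ∀ D ∈ Sᶜ.powerset, ((∏ i ∈ S ∪ D, pr i) * ∏ i ∈ (S ∪ D)ᶜ, (1 - pr i))
      = (∏ i ∈ S, pr i) * ((∏ i ∈ D, pr i) * ∏ i ∈ Sᶜ \ D, (1 - pr i)) := by
    intro D hD
    simp only [mem_powerset] at hD
    have hdisj : Disjoint S D := by
      rw [Finset.disjoint_left]
      intro a haS haD
      have := hD haD
      simp only [mem_compl] at this
      exact this haS
    have h1 : ∏ i ∈ S ∪ D, pr i = (∏ i ∈ S, pr i) * ∏ i ∈ D, pr i :=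
      Finset.prod_union hdisj
    have h2 : (S ∪ D)ᶜ = Sᶜ \ D := by
      ext x; simp [mem_compl, mem_sdiff, not_or, and_comm]
    rw [h1, h2]; ring
  rw [Finset.sum_congr rfl hcong, ← Finset.mul_sum]
  have hpa := Finset.prod_add pr (fun i => 1 - pr i) Sᶜ
  simp only [add_sub_cancel, Finset.prod_const_one] at hpa
  rw [← hpa]
  simp



/-- **Proposition 3(ii) (gradient noise for independent sampling).** Let `S` be an independent
sampling with inclusion probabilities `0 < pr_i ≤ 1`, i.e.
`p_C = Π_{i∈C} pr_i · Π_{i∉C} (1 − pr_i)`, and let `x*` satisfy `Σ_i ∇f_i(x*) = 0`, with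
`h_i = ∇f_i(x*)`. Then `σ² = Σ_C p_C ‖∇f_{v(C)}(x*)‖² = (1/n²) Σ_i ((1 − pr_i)/pr_i) ‖h_i‖²`. -/
theorem gradient_noise_independent_sampling
    {d n : ℕ}
    (pr : Fin n → ℝ)
    (hpr0 : ∀ i, 0 < pr i) (hpr1 : ∀ i, pr i ≤ 1)
    (p : Finset (Fin n) → ℝ)
    (hp : ∀ C : Finset (Fin n), p C = (∏ i ∈ C, pr i) * ∏ i ∈ Cᶜ, (1 - pr i))
    (q : Fin n → ℝ)
    (hq : ∀ i, q i = ∑ C ∈ Finset.univ.filter (fun C : Finset (Fin n) => i ∈ C), p C)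
    (f : Fin n → EuclideanSpace ℝ (Fin d) → ℝ)
    (hdiff : ∀ i, Differentiable ℝ (f i))
    (xstar : EuclideanSpace ℝ (Fin d))
    (hsum0 : ∑ i, gradient (f i) xstar = 0)
    (h : Fin n → EuclideanSpace ℝ (Fin d))
    (hh : ∀ i, h i = gradient (f i) xstar)
    (gC : Finset (Fin n) → EuclideanSpace ℝ (Fin d) → EuclideanSpace ℝ (Fin d))
    (hgC : ∀ C x, gC C x = ((n : ℝ)⁻¹) • ∑ i ∈ C, (q i)⁻¹ • gradient (f i) x) :
    ∑ C : Finset (Fin n), p C * ‖gC C xstar‖ ^ 2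
      = (1 / (n : ℝ) ^ 2) * ∑ i, ((1 - pr i) / pr i) * ‖h i‖ ^ 2 := by
  -- q i = pr i
  have hq' : ∀ i, q i = pr i := by
    intro i
    rw [hq i]
    have := sum_p_superset pr {i}
    simp only [Finset.singleton_subset_iff, Finset.prod_singleton] at this
    rw [← this]
    exact Finset.sum_congr rfl fun C hC => hp C
  -- joint probabilities
  have hjoint : ∀ i j : Fin n,
      ∑ C ∈ Finset.univ.filter (fun C : Finset (Fin n) => i ∈ C ∧ j ∈ C), p C
        = if i = j then pr i else pr i * pr j := by
    intro i j
    have := sum_p_superset pr {i, j}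
    have hfil : Finset.univ.filter (fun C : Finset (Fin n) => i ∈ C ∧ j ∈ C)
        = Finset.univ.filter (fun C : Finset (Fin n) => ({i, j} : Finset (Fin n)) ⊆ C) := by
      apply Finset.filter_congr
      intro C _
      simp [Finset.insert_subset_iff]
    rw [hfil, Finset.sum_congr rfl fun C _ => hp C, this]
    by_cases hij : i = j
    · subst hij; simp
    · rw [Finset.prod_insert (by simp [hij]), Finset.prod_singleton]
      simp [hij]
  -- per-C expansion
  have key : ∀ C : Finset (Fin n), p C * ‖gC C xstar‖ ^ 2
      = ∑ i, ∑ j, (if i ∈ C ∧ j ∈ C then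
          ((n : ℝ)⁻¹ ^ 2 * ((pr i)⁻¹ * (pr j)⁻¹ * ⟪h i, h j⟫)) * p C else 0) := by
    intro C
    have hg : gC C xstar = ((n : ℝ)⁻¹) • ∑ i ∈ C, (pr i)⁻¹ • h i := by
      rw [hgC]
      congr 1
      exact Finset.sum_congr rfl fun i _ => by rw [hq' i, hh i]
    have hnorm : ‖gC C xstar‖ ^ 2
        = (n : ℝ)⁻¹ ^ 2 * ∑ i ∈ C, ∑ j ∈ C, ((pr i)⁻¹ * (pr j)⁻¹) * ⟪h i, h j⟫ := by
      rw [hg, norm_smul, mul_pow]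
      congr 1
      · rw [Real.norm_eq_abs, sq_abs]
      · rw [← real_inner_self_eq_norm_sq, sum_inner]
        refine Finset.sum_congr rfl fun i _ => ?_
        rw [inner_sum]
        refine Finset.sum_congr rfl fun j _ => ?_
        rw [real_inner_smul_left, real_inner_smul_right]; ring
    rw [hnorm]
    have step1 : ∀ i : Fin n, (∑ j, (if i ∈ C ∧ j ∈ C then
          ((n : ℝ)⁻¹ ^ 2 * ((pr i)⁻¹ * (pr j)⁻¹ * ⟪h i, h j⟫)) * p C else 0))
        = if i ∈ C then ∑ j ∈ C, ((n : ℝ)⁻¹ ^ 2 * ((pr i)⁻¹ * (pr j)⁻¹ * ⟪h i, h j⟫)) * p C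
          else 0 := by
      intro i
      by_cases hiC : i ∈ C
      · rw [if_pos hiC]
        have e1 : ∀ j : Fin n, (if i ∈ C ∧ j ∈ C then
              ((n : ℝ)⁻¹ ^ 2 * ((pr i)⁻¹ * (pr j)⁻¹ * ⟪h i, h j⟫)) * p C else 0)
            = if j ∈ C then
              ((n : ℝ)⁻¹ ^ 2 * ((pr i)⁻¹ * (pr j)⁻¹ * ⟪h i, h j⟫)) * p C else 0 := by
          intro j
          by_cases hjC : j ∈ C
          · rw [if_pos ⟨hiC, hjC⟩, if_pos hjC]
          · rw [if_neg (fun hc => hjC hc.2), if_neg hjC]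
        rw [Finset.sum_congr rfl fun j _ => e1 j, Finset.sum_ite_mem, Finset.univ_inter]
      · rw [if_neg hiC]
        exact Finset.sum_eq_zero fun j _ => if_neg (fun hc => hiC hc.1)
    rw [Finset.sum_congr rfl fun i _ => step1 i, Finset.sum_ite_mem, Finset.univ_inter]
    rw [Finset.mul_sum, Finset.mul_sum]
    refine Finset.sum_congr rfl fun i _ => ?_
    rw [Finset.mul_sum, Finset.mul_sum]
    refine Finset.sum_congr rfl fun j _ => ?_
    ring
  rw [Finset.sum_congr rfl fun C _ => key C]
  rw [Finset.sum_comm]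
  have hswap : ∀ i : Fin n, ∑ C : Finset (Fin n), ∑ j, (if i ∈ C ∧ j ∈ C then
          ((n : ℝ)⁻¹ ^ 2 * ((pr i)⁻¹ * (pr j)⁻¹ * ⟪h i, h j⟫)) * p C else 0)
      = ∑ j, ((n : ℝ)⁻¹ ^ 2 * ((pr i)⁻¹ * (pr j)⁻¹ * ⟪h i, h j⟫))
          * (if i = j then pr i else pr i * pr j) := by
    intro i
    rw [Finset.sum_comm]
    refine Finset.sum_congr rfl fun j _ => ?_
    rw [← hjoint i j, Finset.mul_sum, Finset.sum_filter]
  rw [Finset.sum_congr rfl fun i _ => hswap i]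
  -- simplify each term
  have hterm : ∀ i j : Fin n, ((n : ℝ)⁻¹ ^ 2 * ((pr i)⁻¹ * (pr j)⁻¹ * ⟪h i, h j⟫))
          * (if i = j then pr i else pr i * pr j)
      = (n : ℝ)⁻¹ ^ 2 * ⟪h i, h j⟫
        + (if i = j then (n : ℝ)⁻¹ ^ 2 * ((1 - pr i) / pr i) * ‖h i‖ ^ 2 else 0) := by
    intro i j
    have hi := (hpr0 i).ne'
    have hj := (hpr0 j).ne'
    have ei : (pr i)⁻¹ * pr i = 1 := inv_mul_cancel₀ hi
    have ej : (pr j)⁻¹ * pr j = 1 := inv_mul_cancel₀ hj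
    by_cases hij : i = j
    · subst hij
      rw [if_pos rfl, if_pos rfl, real_inner_self_eq_norm_sq]
      have e : (1 - pr i) / pr i = (pr i)⁻¹ - 1 := by
        rw [sub_div, div_self hi, one_div]
      rw [e]
      linear_combination ((n : ℝ)⁻¹ ^ 2 * (pr i)⁻¹ * ‖h i‖ ^ 2) * ei
    · rw [if_neg hij, if_neg hij, add_zero]
      linear_combination ((n : ℝ)⁻¹ ^ 2 * ⟪h i, h j⟫ * ((pr j)⁻¹ * pr j)) * ei
        + ((n : ℝ)⁻¹ ^ 2 * ⟪h i, h j⟫) * ej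
  rw [Finset.sum_congr rfl fun i _ => Finset.sum_congr rfl fun j _ => hterm i j]
  simp only [Finset.sum_add_distrib]
  have hz : ∑ i, ∑ j, (n : ℝ)⁻¹ ^ 2 * ⟪h i, h j⟫ = 0 := by
    have hK : ∑ i, ∑ j, ⟪h i, h j⟫ = (0 : ℝ) := by
      have : ∑ i, ∑ j, ⟪h i, h j⟫ = ⟪∑ i, h i, ∑ j, h j⟫ := by
        rw [sum_inner]
        exact Finset.sum_congr rfl fun i _ => (inner_sum _ _ _).symm
      rw [this]
      have : ∑ i, h i = 0 := by
        rw [Finset.sum_congr rfl fun i _ => hh i, hsum0]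
      rw [this, inner_zero_left]
    calc ∑ i, ∑ j, (n : ℝ)⁻¹ ^ 2 * ⟪h i, h j⟫
        = (n : ℝ)⁻¹ ^ 2 * ∑ i, ∑ j, ⟪h i, h j⟫ := by
          rw [Finset.mul_sum]
          exact Finset.sum_congr rfl fun i _ => (Finset.mul_sum _ _ _).symm
      _ = 0 := by rw [hK, mul_zero]
  rw [hz, zero_add]
  simp only [Finset.sum_ite_eq, Finset.mem_univ, if_true]
  rw [Finset.mul_sum]
  refine Finset.sum_congr rfl fun i _ => ?_
  rw [one_div, ← inv_pow]
  ring
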